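/- Let N ≥ 1, T ≥ 1, H ≥ 1 be natural numbers, h : Fin N → ℝ a synthesis window with max_{m < N} |h(m)| ≤ 1, and suppose two spectrograms S₁, S₂ : Fin T → Fin N → ℂ satisfy (Σ_{t < T} Σ_{k < N} |S₁(t,k) − S₂(t,k)|²)^{1/2} ≤ Δ. Then the overlap-add ISTFT signals x_{S₁}, x_{S₂} : ℤ → ℂ, defined by x_S(n) = Σ_{t < T} [if 0 ≤ n − tH < N then h(n − tH) · Σ_{k < N} S(t,k) · exp(2πi·k·(n − tH)/N) else 0], satisfy (Σ_{n ∈ ℤ} |x_{S₁}(n) − x_{S₂}(n)|²)^{1/2} ≤ √(N·T) · Δ. -/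

import Mathlib

open Complex Real

lemma exp_sum_orth (N : ℕ) (hN : 0 < N) (d : ℤ) (h1 : -(N:ℤ) < d) (h2 : d < N) (hd : d ≠ 0) :
    ∑ m ∈ Finset.range N, Complex.exp (2 * Real.pi * Complex.I * d * m / N) = 0 := by
  have hNC : (N : ℂ) ≠ 0 := Nat.cast_ne_zero.mpr hN.ne'
  have hπ : (Real.pi : ℂ) ≠ 0 := by exact_mod_cast Real.pi_ne_zero
  set z : ℂ := Complex.exp (2 * Real.pi * Complex.I * d / N) with hz
  have hzm : ∀ m : ℕ, Complex.exp (2 * Real.pi * Complex.I * d * m / N) = z ^ m := by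
    intro m
    rw [hz, ← Complex.exp_nat_mul]
    congr 1
    ring
  have hz1 : z ≠ 1 := by
    intro h
    rw [hz, Complex.exp_eq_one_iff] at h
    obtain ⟨n, hn⟩ := h
    have : (d : ℂ) = (n : ℂ) * N := by
      field_simp at hn
      have h2πI : (2 * (Real.pi:ℂ) * Complex.I) ≠ 0 := by
        simp [hπ, Complex.I_ne_zero]
      apply mul_left_cancel₀ h2πI
      linear_combination (2 * (Real.pi:ℂ) * Complex.I) * hn
    have hdn : d = n * N := by exact_mod_cast this
    have hN' : 0 < (N:ℤ) := by exact_mod_cast hN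
    have hn0 : n = 0 := by
      by_contra h0
      rcases lt_or_gt_of_ne h0 with hlt | hgt
      · have : n * (N:ℤ) ≤ -N := by nlinarith
        omega
      · have : (N:ℤ) ≤ n * N := by nlinarith
        omega
    simp [hn0] at hdn
    exact hd hdn
  have hzN : z ^ N = 1 := by
    rw [hz, ← Complex.exp_nat_mul]
    have : (N:ℂ) * (2 * Real.pi * Complex.I * d / N) = d * (2 * Real.pi * Complex.I) := by
      field_simp
    rw [this, Complex.exp_int_mul_two_pi_mul_I]
  calc ∑ m ∈ Finset.range N, Complex.exp (2 * Real.pi * Complex.I * d * m / N)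
      = ∑ m ∈ Finset.range N, z ^ m := Finset.sum_congr rfl (fun m _ => hzm m)
    _ = (z ^ N - 1) / (z - 1) := geom_sum_eq hz1 N
    _ = 0 := by rw [hzN]; simp

lemma parseval (N : ℕ) (hN : 0 < N) (c : Fin N → ℂ) :
    ∑ m ∈ Finset.range N,
        ‖∑ k : Fin N, c k * Complex.exp (2 * Real.pi * Complex.I * k * m / N)‖ ^ 2
      = N * ∑ k : Fin N, ‖c k‖ ^ 2 := by
  have key : ∀ z : ℂ, ((‖z‖ ^ 2 : ℝ) : ℂ) = z * (starRingEnd ℂ) z := by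
    intro z
    rw [Complex.sq_norm]
    exact_mod_cast (Complex.mul_conj z).symm
  apply Complex.ofReal_injective
  push_cast
  have conjE : ∀ (k : Fin N) (m : ℕ),
      (starRingEnd ℂ) (Complex.exp (2 * Real.pi * Complex.I * k * m / N))
        = Complex.exp (-(2 * Real.pi * Complex.I * k * m / N)) := by
    intro k m
    rw [← Complex.exp_conj]
    congr 1
    simp [map_div₀, map_mul, Complex.conj_I, map_ofNat]
    ring
  calc ∑ m ∈ Finset.range N,
        ((‖∑ k : Fin N, c k * Complex.exp (2 * Real.pi * Complex.I * k * m / N)‖ : ℂ) ^ 2)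
      = ∑ m ∈ Finset.range N, ∑ k : Fin N, ∑ k' : Fin N,
          c k * (starRingEnd ℂ) (c k') *
            Complex.exp (2 * Real.pi * Complex.I * ((k : ℤ) - (k' : ℤ)) * m / N) := by
        refine Finset.sum_congr rfl fun m _ => ?_
        rw [show ((‖∑ k : Fin N, c k * Complex.exp (2 * Real.pi * Complex.I * k * m / N)‖ : ℂ) ^ 2)
            = ((‖∑ k : Fin N, c k * Complex.exp (2 * Real.pi * Complex.I * k * m / N)‖ ^ 2 : ℝ) : ℂ) by push_cast; ring,
          key, map_sum, Finset.sum_mul_sum]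
        refine Finset.sum_congr rfl fun k _ => Finset.sum_congr rfl fun k' _ => ?_
        rw [map_mul, conjE]
        rw [mul_mul_mul_comm, ← Complex.exp_add]
        congr 1
        push_cast
        ring
    _ = ∑ k : Fin N, ∑ k' : Fin N, (c k * (starRingEnd ℂ) (c k')) *
          ∑ m ∈ Finset.range N, Complex.exp (2 * Real.pi * Complex.I * ((k : ℤ) - (k' : ℤ)) * m / N) := by
        rw [Finset.sum_comm]
        refine Finset.sum_congr rfl fun k _ => ?_
        rw [Finset.sum_comm]
        refine Finset.sum_congr rfl fun k' _ => ?_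
        rw [Finset.mul_sum]
    _ = ∑ k : Fin N, (c k * (starRingEnd ℂ) (c k)) * N := by
        refine Finset.sum_congr rfl fun k _ => ?_
        rw [Finset.sum_eq_single k]
        · simp
        · intro k' _ hne
          have hd : ((k : ℤ) - (k' : ℤ)) ≠ 0 := by
            simp only [sub_ne_zero]
            exact_mod_cast fun hh => hne (Fin.ext (by exact_mod_cast hh)).symm
          have h0 := exp_sum_orth N hN ((k : ℤ) - (k' : ℤ)) (by omega) (by omega) hd
          push_cast at h0 ⊢
          rw [h0, mul_zero]
        · simp
    _ = N * ∑ k : Fin N, ((‖c k‖ : ℂ)) ^ 2 := by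
        rw [← Finset.sum_mul, mul_comm]
        congr 1
        refine Finset.sum_congr rfl fun k _ => ?_
        rw [← key (c k)]
        push_cast
        ring

/-- Overlap-add ISTFT: given a spectrogram `S : Fin T → Fin N → ℂ` (T frames, N bins)
with hop size `H` and synthesis window `h : Fin N → ℝ`, the reconstructed signal at
time `n ∈ ℤ` is the sum over frames of the windowed, shifted unnormalized inverse DFT:
`x_S(n) = Σ_{t<T} [if 0 ≤ n − tH < N then h(n−tH) · Σ_{k<N} S(t,k)·exp(2πi·k·(n−tH)/N) else 0]`. -/
noncomputable def olaISTFT (N T H : ℕ) (h : Fin N → ℝ)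
    (S : Fin T → Fin N → ℂ) (n : ℤ) : ℂ :=
  ∑ t : Fin T,
    if hc : 0 ≤ n - (t : ℤ) * H ∧ n - (t : ℤ) * H < N then
      (h ⟨(n - (t : ℤ) * H).toNat, by omega⟩ : ℂ) *
        ∑ k : Fin N, S t k *
          Complex.exp (2 * Real.pi * Complex.I * (k : ℕ) * ((n - (t : ℤ) * H) : ℤ) / N)
    else 0

noncomputable def frameD (N T H : ℕ) (h : Fin N → ℝ)
    (D : Fin T → Fin N → ℂ) (t : Fin T) (n : ℤ) : ℂ :=
  if hc : 0 ≤ n - (t : ℤ) * H ∧ n - (t : ℤ) * H < N then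
    (h ⟨(n - (t : ℤ) * H).toNat, by omega⟩ : ℂ) *
      ∑ k : Fin N, D t k *
        Complex.exp (2 * Real.pi * Complex.I * (k : ℕ) * ((n - (t : ℤ) * H) : ℤ) / N)
  else 0

lemma ola_sub (N T H : ℕ) (h : Fin N → ℝ) (S₁ S₂ : Fin T → Fin N → ℂ) (n : ℤ) :
    olaISTFT N T H h S₁ n - olaISTFT N T H h S₂ n
      = ∑ t : Fin T, frameD N T H h (fun t k => S₁ t k - S₂ t k) t n := by
  rw [olaISTFT, olaISTFT, ← Finset.sum_sub_distrib]
  refine Finset.sum_congr rfl fun t _ => ?_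
  rw [frameD]
  split_ifs with hc
  · rw [← mul_sub, ← Finset.sum_sub_distrib]
    congr 1
    refine Finset.sum_congr rfl fun k _ => ?_
    rw [← sub_mul]
  · simp

lemma frameD_window (N T H : ℕ) (h : Fin N → ℝ) (D : Fin T → Fin N → ℂ)
    (t : Fin T) (m : Fin N) :
    frameD N T H h D t ((t : ℤ) * H + ((m : ℕ) : ℤ))
      = (h m : ℂ) * ∑ k : Fin N, D t k *
          Complex.exp (2 * Real.pi * Complex.I * (k : ℕ) * ((m : ℕ) : ℤ) / N) := by
  have harith : (t : ℤ) * H + ((m : ℕ) : ℤ) - (t : ℤ) * H = ((m : ℕ) : ℤ) := by ring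
  rw [frameD, dif_pos (by rw [harith]; exact ⟨Int.natCast_nonneg _, by exact_mod_cast m.isLt⟩)]
  simp only [harith]
  congr 2

lemma frameD_zero (N T H : ℕ) (h : Fin N → ℝ) (D : Fin T → Fin N → ℂ)
    (t : Fin T) (n : ℤ) (hn : n < (t : ℤ) * H ∨ (t : ℤ) * H + N ≤ n) :
    frameD N T H h D t n = 0 := by
  rw [frameD, dif_neg]
  omega

lemma frame_l2_bound (N T H : ℕ) (hN : 1 ≤ N) (hH : 1 ≤ H) (h : Fin N → ℝ)
    (hwin : ∀ m : Fin N, |h m| ≤ 1) (D : Fin T → Fin N → ℂ) (t : Fin T) :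
    ∑ i ∈ Finset.range ((T - 1) * H + N), ‖frameD N T H h D t (i : ℤ)‖ ^ 2
      ≤ N * ∑ k : Fin N, ‖D t k‖ ^ 2 := by
  have ht2 : (t : ℕ) * H ≤ (T - 1) * H := Nat.mul_le_mul_right _ (by have := t.isLt; omega)
  have hsub : Finset.Ico ((t : ℕ) * H) ((t : ℕ) * H + N) ⊆ Finset.range ((T - 1) * H + N) := by
    intro i hi
    simp only [Finset.mem_Ico] at hi
    simp only [Finset.mem_range]
    omega
  rw [← Finset.sum_subset hsub (by
    intro i _ hi
    simp only [Finset.mem_Ico, not_and_or, not_le] at hi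
    rw [frameD_zero]
    · simp
    · rcases hi with h1 | h2
      · left; push_cast; omega
      · right; push_cast; omega)]
  rw [Finset.sum_Ico_eq_sum_range]
  simp only [Nat.add_sub_cancel_left]
  calc ∑ i ∈ Finset.range N, ‖frameD N T H h D t (((t : ℕ) * H + i : ℕ) : ℤ)‖ ^ 2
      ≤ ∑ i ∈ Finset.range N,
          ‖∑ k : Fin N, D t k *
            Complex.exp (2 * Real.pi * Complex.I * (k : ℕ) * (i : ℕ) / N)‖ ^ 2 := by
        refine Finset.sum_le_sum fun i hi => ?_
        rw [Finset.mem_range] at hi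
        have hcast : (((t : ℕ) * H + i : ℕ) : ℤ) = (t : ℤ) * H + ((⟨i, hi⟩ : Fin N) : ℕ) := by
          push_cast; rfl
        rw [hcast, frameD_window N T H h D t ⟨i, hi⟩]
        rw [norm_mul, mul_pow, Complex.norm_real, Real.norm_eq_abs]
        have h1 : |h ⟨i, hi⟩| ^ 2 ≤ 1 := by
          have := hwin ⟨i, hi⟩
          nlinarith [abs_nonneg (h ⟨i, hi⟩)]
        have h2 : (0:ℝ) ≤ ‖∑ k : Fin N, D t k *
            Complex.exp (2 * Real.pi * Complex.I * (k : ℕ) * (((⟨i, hi⟩ : Fin N) : ℕ) : ℤ) / N)‖ ^ 2 := by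
          positivity
        calc |h ⟨i, hi⟩| ^ 2 * _ ≤ 1 * _ := mul_le_mul_of_nonneg_right h1 h2
          _ = _ := by rw [one_mul]; norm_cast
    _ = N * ∑ k : Fin N, ‖D t k‖ ^ 2 := parseval N (by omega) (D t)

/-- **Remark + Theorem 1 combined.** If the synthesis window satisfies `‖h‖_∞ ≤ 1`
(e.g. a canonical Hann window) and two spectrograms differ by at most `Δ` in
entrywise ℓ² norm, then the overlap-add ISTFT signals differ by at most
`√(N·T) · Δ` in ℓ² norm. -/
theorem istft_bounded_error (N T H : ℕ) (hN : 1 ≤ N) (hT : 1 ≤ T) (hH : 1 ≤ H)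
    (h : Fin N → ℝ) (hwin : ∀ m : Fin N, |h m| ≤ 1)
    (S₁ S₂ : Fin T → Fin N → ℂ) (Δ : ℝ)
    (hS : Real.sqrt (∑ t : Fin T, ∑ k : Fin N, ‖S₁ t k - S₂ t k‖ ^ 2) ≤ Δ) :
    Real.sqrt (∑' n : ℤ, ‖olaISTFT N T H h S₁ n - olaISTFT N T H h S₂ n‖ ^ 2) ≤
      Real.sqrt (N * T) * Δ := by
  have hΔ : 0 ≤ Δ := le_trans (Real.sqrt_nonneg _) hS
  set D : Fin T → Fin N → ℂ := fun t k => S₁ t k - S₂ t k with hDdef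
  set M : ℕ := (T - 1) * H + N with hMdef
  -- reduce tsum to finite sum over range M
  have hvan : ∀ n : ℤ,
      n ∉ (Finset.range M).map ⟨(Nat.cast : ℕ → ℤ), Nat.cast_injective⟩ →
      ‖olaISTFT N T H h S₁ n - olaISTFT N T H h S₂ n‖ ^ 2 = 0 := by
    intro n hn
    have hn' : n < 0 ∨ (M : ℤ) ≤ n := by
      by_contra hcon
      push_neg at hcon
      exact hn (by
        simp only [Finset.mem_map, Finset.mem_range, Function.Embedding.coeFn_mk]
        exact ⟨n.toNat, by omega, by omega⟩)
    rw [ola_sub, Finset.sum_eq_zero (fun t _ => ?_)]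
    · simp
    · apply frameD_zero
      have ht2 : (t : ℕ) * H ≤ (T - 1) * H := Nat.mul_le_mul_right _ (by have := t.isLt; omega)
      have hM' : ((t : ℕ) * H + N : ℤ) ≤ (M : ℤ) := by
        rw [hMdef]; push_cast; omega
      rcases hn' with h1 | h2
      · left
        have : (0 : ℤ) ≤ (t : ℤ) * H := by positivity
        omega
      · right
        push_cast at hM' ⊢
        omega
  rw [tsum_eq_sum hvan, Finset.sum_map]
  simp only [Function.Embedding.coeFn_mk]
  -- Euclidean space setup
  set V : Fin T → EuclideanSpace ℂ (Fin M) :=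
    fun t => WithLp.toLp 2 (fun i => frameD N T H h D t ((i : ℕ) : ℤ)) with hVdef
  have hsum_eq : ∑ i ∈ Finset.range M,
      ‖olaISTFT N T H h S₁ (i : ℤ) - olaISTFT N T H h S₂ (i : ℤ)‖ ^ 2
      = ‖∑ t : Fin T, V t‖ ^ 2 := by
    rw [EuclideanSpace.norm_eq, Real.sq_sqrt (by positivity)]
    rw [← Fin.sum_univ_eq_sum_range (fun i =>
      ‖olaISTFT N T H h S₁ (i : ℤ) - olaISTFT N T H h S₂ (i : ℤ)‖ ^ 2)]
    refine Finset.sum_congr rfl fun i _ => ?_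
    rw [ola_sub]
    have : (∑ t : Fin T, V t) i = ∑ t : Fin T, frameD N T H h D t ((i : ℕ) : ℤ) := by
      simp [hVdef]
    rw [this]
  rw [hsum_eq]
  -- norms of frames
  set a : Fin T → ℝ := fun t => Real.sqrt (∑ k : Fin N, ‖D t k‖ ^ 2) with hadef
  have hVnorm : ∀ t : Fin T, ‖V t‖ ≤ Real.sqrt N * a t := by
    intro t
    rw [EuclideanSpace.norm_eq]
    have : ∑ i : Fin M, ‖V t i‖ ^ 2
        = ∑ i ∈ Finset.range M, ‖frameD N T H h D t (i : ℤ)‖ ^ 2 := by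
      rw [← Fin.sum_univ_eq_sum_range (fun i =>
        ‖frameD N T H h D t (i : ℤ)‖ ^ 2)]
    rw [this]
    calc Real.sqrt (∑ i ∈ Finset.range M, ‖frameD N T H h D t (i : ℤ)‖ ^ 2)
        ≤ Real.sqrt (N * ∑ k : Fin N, ‖D t k‖ ^ 2) :=
          Real.sqrt_le_sqrt (frame_l2_bound N T H hN hH h hwin D t)
      _ = Real.sqrt N * a t := by
          rw [hadef, ← Real.sqrt_mul (Nat.cast_nonneg N)]
  -- combine
  have hnormsum : ‖∑ t : Fin T, V t‖ ≤ Real.sqrt N * ∑ t : Fin T, a t := by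
    calc ‖∑ t : Fin T, V t‖ ≤ ∑ t : Fin T, ‖V t‖ := norm_sum_le _ _
      _ ≤ ∑ t : Fin T, Real.sqrt N * a t := Finset.sum_le_sum fun t _ => hVnorm t
      _ = Real.sqrt N * ∑ t : Fin T, a t := by rw [Finset.mul_sum]
  have hanonneg : ∀ t, 0 ≤ a t := fun t => Real.sqrt_nonneg _
  have hCS : ∑ t : Fin T, a t ≤ Real.sqrt T * Δ := by
    have hsq : (∑ t : Fin T, a t) ^ 2 ≤ (T : ℝ) * ∑ t : Fin T, a t ^ 2 := by
      have := sq_sum_le_card_mul_sum_sq (s := (Finset.univ : Finset (Fin T))) (f := a)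
      simpa using this
    have hsum2 : ∑ t : Fin T, a t ^ 2 = ∑ t : Fin T, ∑ k : Fin N, ‖D t k‖ ^ 2 :=
      Finset.sum_congr rfl fun t _ => Real.sq_sqrt (by positivity)
    have h1 : ∑ t : Fin T, a t ≤ Real.sqrt ((T : ℝ) * ∑ t : Fin T, a t ^ 2) := by
      rw [← Real.sqrt_sq (Finset.sum_nonneg fun t _ => hanonneg t)]
      exact Real.sqrt_le_sqrt hsq
    calc ∑ t : Fin T, a t ≤ Real.sqrt ((T : ℝ) * ∑ t : Fin T, a t ^ 2) := h1
      _ = Real.sqrt T * Real.sqrt (∑ t : Fin T, ∑ k : Fin N, ‖D t k‖ ^ 2) := by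
          rw [Real.sqrt_mul (Nat.cast_nonneg T), hsum2]
      _ ≤ Real.sqrt T * Δ := by
          exact mul_le_mul_of_nonneg_left hS (Real.sqrt_nonneg _)
  calc Real.sqrt (‖∑ t : Fin T, V t‖ ^ 2) = ‖∑ t : Fin T, V t‖ :=
        Real.sqrt_sq (norm_nonneg _)
    _ ≤ Real.sqrt N * ∑ t : Fin T, a t := hnormsum
    _ ≤ Real.sqrt N * (Real.sqrt T * Δ) :=
        mul_le_mul_of_nonneg_left hCS (Real.sqrt_nonneg _)
    _ = Real.sqrt (N * T) * Δ := by
        rw [← mul_assoc, ← Real.sqrt_mul (Nat.cast_nonneg N)]
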